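/- Let F be a finite field with q elements, n = r₁ + ... + r_s with all rᵢ > 0, and A = diag(J_{r₁}(0), ..., J_{r_s}(0)) the block-diagonal matrix of lower Jordan blocks with eigenvalue 0. Then the number of nilpotent n×n matrices over F obtainable by replacing the last column of A equals q^(n - r_s), and the number of non-nilpotent semi-idempotent matrices obtainable by replacing the last column of A also equals q^(n - r_s). -/

import Mathlib

open Polynomial

/-- The block-diagonal matrix `diag(J_{r 0}(0), …, J_{r (s-1)}(0))` of lower Jordan
blocks with eigenvalue `0`, of total size `n = r 0 + ⋯ + r (s-1)`: it has a `1` in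
position `(i, i-1)` exactly when `i` is not a partial sum of the block sizes, and
`0` elsewhere. -/
noncomputable def jordanBlockDiag (F : Type*) [Field F] (s : ℕ) (r : ℕ → ℕ) (n : ℕ) :
    Matrix (Fin n) (Fin n) F :=
  open scoped Classical in
  fun i j =>
    if (i : ℕ) = (j : ℕ) + 1 ∧
        ¬ ∃ k ≤ s, (i : ℕ) = ∑ t ∈ Finset.range k, r t then 1 else 0

/-- A square matrix is semi-idempotent iff its minimal polynomial divides
`x^ℓ (x - 1)` for some `ℓ`. -/
def IsSemiIdempotent {F : Type*} [Field F] {n : ℕ} (M : Matrix (Fin n) (Fin n) F) : Prop :=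
  ∃ ℓ : ℕ, minpoly F M ∣ X ^ ℓ * (X - 1)

open Matrix Finset

namespace CLM
variable {F : Type*} [Field F]

/-- companion-type matrix with last column `d`. -/
def comp {m : ℕ} (d : Fin m → F) : Matrix (Fin m) (Fin m) F :=
  fun i j => if (j : ℕ) = m - 1 then d i else if (i : ℕ) = (j : ℕ) + 1 then 1 else 0

lemma matrix_eq_zero_of_cols {k l : ℕ} {X : Matrix (Fin k) (Fin l) F}
    (h : ∀ j, X *ᵥ Pi.single j 1 = 0) : X = 0 := by
  ext i j
  have := congrFun (h j) i
  simpa using this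

lemma comp_col_last {m : ℕ} (hm : 0 < m) (d : Fin m → F) :
    comp d *ᵥ Pi.single ⟨m - 1, by omega⟩ 1 = d := by
  funext i
  simp [comp]

lemma comp_col {m : ℕ} (d : Fin m → F) (j : Fin m) (hj : (j : ℕ) + 1 < m) :
    comp d *ᵥ Pi.single j 1 = Pi.single ⟨(j : ℕ) + 1, hj⟩ 1 := by
  funext i
  simp only [Matrix.mulVec_single_one, Matrix.col_apply, comp, Pi.single_apply, Fin.ext_iff]
  rw [if_neg (by omega)]

lemma comp_pow_col {m : ℕ} (hm : 0 < m) (d : Fin m → F) (t : ℕ) (ht : t < m) :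
    (comp d) ^ t *ᵥ Pi.single (⟨0, hm⟩ : Fin m) 1 = Pi.single (⟨t, ht⟩ : Fin m) 1 := by
  induction t with
  | zero =>
      rw [pow_zero, Matrix.one_mulVec]
  | succ k ih =>
      have hk : k < m := by omega
      rw [pow_succ', ← Matrix.mulVec_mulVec, ih hk]
      exact comp_col d ⟨k, hk⟩ ht

noncomputable def fpoly {m : ℕ} (d : Fin m → F) : F[X] :=
  X ^ m - ∑ j : Fin m, Polynomial.C (d j) * X ^ (j : ℕ)

lemma fpoly_monic {m : ℕ} (d : Fin m → F) : (fpoly d).Monic :=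
  monic_X_pow_sub (degree_sum_fin_lt d)

lemma fpoly_degree {m : ℕ} (d : Fin m → F) : (fpoly d).degree = m := by
  unfold fpoly
  rcases eq_or_lt_of_le (Nat.zero_le m) with h | h
  · subst h; simp
  · rw [degree_sub_eq_left_of_degree_lt, degree_X_pow]
    rw [degree_X_pow]; exact degree_sum_fin_lt d

lemma fpoly_natDegree {m : ℕ} (d : Fin m → F) : (fpoly d).natDegree = m :=
  natDegree_eq_of_degree_eq_some (fpoly_degree d)

lemma fpoly_coeff {m : ℕ} (d : Fin m → F) (j : Fin m) :
    (fpoly d).coeff (j : ℕ) = - d j := by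
  unfold fpoly
  rw [coeff_sub, finset_sum_coeff, coeff_X_pow, if_neg (by omega)]
  rw [Finset.sum_eq_single j]
  · simp
  · intro b _ hb
    rw [coeff_C_mul, coeff_X_pow, if_neg (by simpa [Fin.ext_iff, eq_comm] using hb), mul_zero]
  · simp

lemma sum_mulVec {ι : Type*} {k l : ℕ} (s : Finset ι) (A : ι → Matrix (Fin k) (Fin l) F)
    (v : Fin l → F) : (∑ t ∈ s, A t) *ᵥ v = ∑ t ∈ s, A t *ᵥ v := by
  induction s using Finset.cons_induction with
  | empty => simp [Matrix.zero_mulVec]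
  | cons a s ha ih => simp [Finset.sum_cons, Matrix.add_mulVec, ih]

lemma comp_pow_m_col {m : ℕ} (hm : 0 < m) (d : Fin m → F) :
    (comp d) ^ m *ᵥ Pi.single (⟨0, hm⟩ : Fin m) 1 = d := by
  have h1 : comp d ^ m = comp d * comp d ^ (m - 1) := by
    rw [← pow_succ']; congr 1; omega
  rw [h1, ← Matrix.mulVec_mulVec,
    comp_pow_col hm d (m - 1) (by omega), comp_col_last hm d]

lemma aeval_small {m : ℕ} (hm : 0 < m) (d : Fin m → F) (g : F[X]) (hg : g.natDegree < m) (j : Fin m) :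
    ((aeval (comp d) g) *ᵥ Pi.single (⟨0, hm⟩ : Fin m) 1) j = g.coeff (j : ℕ) := by
  rw [aeval_eq_sum_range' hg]
  have : (∑ t ∈ Finset.range m, g.coeff t • (comp d) ^ t) *ᵥ Pi.single (⟨0, hm⟩ : Fin m) 1
      = ∑ t ∈ Finset.range m, g.coeff t • ((comp d) ^ t *ᵥ Pi.single (⟨0, hm⟩ : Fin m) 1) := by
    rw [sum_mulVec]
    exact Finset.sum_congr rfl fun t _ => Matrix.smul_mulVec _ _ _
  rw [this]
  have h2 : ∀ t ∈ Finset.range m, (g.coeff t • ((comp d) ^ t *ᵥ Pi.single (⟨0, hm⟩ : Fin m) 1)) j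
      = if (j : ℕ) = t then g.coeff t else 0 := by
    intro t ht
    rw [Finset.mem_range] at ht
    rw [comp_pow_col hm d t ht]
    simp [Pi.single_apply, Fin.ext_iff]
  rw [Finset.sum_apply, Finset.sum_congr rfl h2, Finset.sum_ite_eq (Finset.range m) (j : ℕ)]
  simp [j.2]

lemma aeval_fpoly {m : ℕ} (hm : 0 < m) (d : Fin m → F) : aeval (comp d) (fpoly d) = 0 := by
  apply matrix_eq_zero_of_cols
  intro j
  have hcomm : ∀ t : ℕ, aeval (comp d) (fpoly d) * (comp d) ^ t
      = (comp d) ^ t * aeval (comp d) (fpoly d) := by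
    intro t
    have h1 : aeval (comp d) ((X : F[X]) ^ t) = comp d ^ t := by rw [map_pow, aeval_X]
    rw [← h1, ← _root_.map_mul, ← _root_.map_mul, mul_comm]
  have hcol : (Pi.single j 1 : Fin m → F) = (comp d) ^ (j : ℕ) *ᵥ Pi.single (⟨0, hm⟩ : Fin m) 1 := by
    rw [comp_pow_col hm d (j : ℕ) j.2]
  have hzero : aeval (comp d) (fpoly d) *ᵥ Pi.single (⟨0, hm⟩ : Fin m) 1 = 0 := by
    have heval : aeval (comp d) (fpoly d)
        = (comp d) ^ m - ∑ t : Fin m, d t • (comp d) ^ (t : ℕ) := by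
      unfold fpoly
      rw [map_sub, map_sum, map_pow, aeval_X]
      congr 1
      exact Finset.sum_congr rfl fun t _ => by
        rw [_root_.map_mul, aeval_C, map_pow, aeval_X, ← Algebra.smul_def]
    rw [heval, Matrix.sub_mulVec, comp_pow_m_col hm d, sum_mulVec]
    have : ∀ t : Fin m, (d t • (comp d) ^ (t : ℕ)) *ᵥ Pi.single (⟨0, hm⟩ : Fin m) 1
        = d t • (Pi.single t 1 : Fin m → F) := by
      intro t
      rw [Matrix.smul_mulVec, comp_pow_col hm d (t : ℕ) t.2]
    rw [Finset.sum_congr rfl fun t _ => this t]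
    have : (∑ t : Fin m, d t • (Pi.single t 1 : Fin m → F)) = d := by
      funext i
      rw [Finset.sum_apply, Finset.sum_eq_single i]
      · simp
      · intro b _ hb
        simp [Pi.single_apply, hb, Ne.symm hb]
      · simp
    rw [this, sub_self]
  rw [hcol, Matrix.mulVec_mulVec, hcomm, ← Matrix.mulVec_mulVec, hzero, Matrix.mulVec_zero]

lemma fpoly_dvd {m : ℕ} (hm : 0 < m) (d : Fin m → F) (g : F[X])
    (h : aeval (comp d) g = 0) : fpoly d ∣ g := by
  rw [← modByMonic_eq_zero_iff_dvd (fpoly_monic d)] at *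
  by_contra hne
  have hdeg : (g %ₘ fpoly d).natDegree < m := by
    have h3 := natDegree_lt_natDegree hne (degree_modByMonic_lt g (fpoly_monic d))
    have h4 := fpoly_natDegree d
    omega
  have hev : aeval (comp d) (g %ₘ fpoly d) = 0 := by
    have := modByMonic_add_div g (fpoly d)
    have h2 : aeval (comp d) (g %ₘ fpoly d + fpoly d * (g /ₘ fpoly d)) = 0 := by rw [this, h]
    rw [map_add, _root_.map_mul, aeval_fpoly hm d, zero_mul, add_zero] at h2
    exact h2
  apply hne
  apply Polynomial.ext
  intro t
  by_cases ht : t < m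
  · have := aeval_small hm d _ hdeg ⟨t, ht⟩
    rw [hev] at this
    simpa using this.symm
  · exact Polynomial.coeff_eq_zero_of_natDegree_lt (by omega)

lemma monic_dvd_X_pow {k : ℕ} {f : F[X]} (hf : f.Monic) (h : f ∣ X ^ k) :
    f = X ^ f.natDegree := by
  obtain ⟨i, _, ha⟩ := (dvd_prime_pow prime_X k).mp h
  have h2 := Polynomial.eq_of_monic_of_associated hf (monic_X_pow i) ha
  rw [h2, natDegree_X_pow]

lemma comp_nilpotent {m : ℕ} (hm : 0 < m) (d : Fin m → F) (k : ℕ)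
    (h : comp d ^ k = 0) : d = 0 := by
  have haev : aeval (comp d) ((X : F[X]) ^ k) = 0 := by rw [map_pow, aeval_X]; exact h
  have hdvd := fpoly_dvd hm d _ haev
  have hf := monic_dvd_X_pow (fpoly_monic d) hdvd
  rw [fpoly_natDegree d] at hf
  funext j
  have h1 := fpoly_coeff d j
  rw [hf, coeff_X_pow, if_neg (by omega)] at h1
  simpa using h1.symm

lemma comp_semi {m : ℕ} (hm : 0 < m) (d : Fin m → F) (ℓ : ℕ)
    (h : comp d ^ ℓ * (comp d - 1) = 0) (hd : d ≠ 0) :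
    ∀ j : Fin m, d j = if (j : ℕ) = m - 1 then 1 else 0 := by
  have haev : aeval (comp d) ((X : F[X]) ^ ℓ * (X - 1)) = 0 := by
    rw [_root_.map_mul, map_pow, aeval_X, map_sub, aeval_X, _root_.map_one]; exact h
  have hdvd := fpoly_dvd hm d _ haev
  have hprime : Prime (X - 1 : F[X]) := by
    have := prime_X_sub_C (1 : F)
    rwa [Polynomial.C_1] at this
  have q1 : (X - 1 : F[X]).Monic := by
    have := monic_X_sub_C (1 : F)
    rwa [Polynomial.C_1] at this
  by_cases hdvd1 : (X - 1 : F[X]) ∣ fpoly d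
  · obtain ⟨f₂, hf2⟩ := hdvd1
    have hXne : (X - 1 : F[X]) ≠ 0 := q1.ne_zero
    have hf2monic : f₂.Monic := by
      apply Polynomial.Monic.of_mul_monic_left q1
      rw [← hf2]; exact fpoly_monic d
    have hf2dvd : f₂ ∣ X ^ ℓ := by
      rw [mul_comm] at hdvd
      rw [hf2] at hdvd
      exact (mul_dvd_mul_iff_left hXne).mp hdvd
    have hf2deg : f₂.natDegree = m - 1 := by
      have h5 : (fpoly d).natDegree = (X - 1 : F[X]).natDegree + f₂.natDegree := by
        rw [hf2, natDegree_mul hXne hf2monic.ne_zero]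
      rw [fpoly_natDegree d] at h5
      have h6 : (X - 1 : F[X]).natDegree = 1 := by
        have := natDegree_X_sub_C (1 : F)
        rwa [Polynomial.C_1] at this
      omega
    have hf2eq := monic_dvd_X_pow hf2monic hf2dvd
    rw [hf2deg] at hf2eq
    have hfe : fpoly d = X ^ m - X ^ (m - 1) := by
      rw [hf2, hf2eq, sub_mul, one_mul, ← pow_succ']
      congr 2
      omega
    intro j
    have h1 := fpoly_coeff d j
    rw [hfe, coeff_sub, coeff_X_pow, coeff_X_pow, if_neg (by omega)] at h1
    by_cases hj : (j : ℕ) = m - 1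
    · rw [if_pos hj] at h1
      rw [if_pos hj]
      linear_combination h1
    · rw [if_neg hj] at h1
      rw [if_neg hj]
      linear_combination h1
  · have hco : IsCoprime (X - 1 : F[X]) (fpoly d) :=
      (hprime.irreducible.coprime_iff_not_dvd).mpr hdvd1
    have hXpow : fpoly d ∣ X ^ ℓ := hco.symm.dvd_of_dvd_mul_right hdvd
    exfalso
    apply hd
    have hf := monic_dvd_X_pow (fpoly_monic d) hXpow
    rw [fpoly_natDegree d] at hf
    funext j
    have h1 := fpoly_coeff d j
    rw [hf, coeff_X_pow, if_neg (by omega)] at h1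
    simpa using h1.symm

noncomputable def jmat (F : Type*) [Field F] (S : ℕ → Prop) (n : ℕ) : Matrix (Fin n) (Fin n) F :=
  open scoped Classical in
  fun i j => if (i : ℕ) = (j : ℕ) + 1 ∧ ¬ S (i : ℕ) then 1 else 0

noncomputable def mat (F : Type*) [Field F] (S : ℕ → Prop) (n : ℕ) (c : Fin n → F) :
    Matrix (Fin n) (Fin n) F :=
  fun i j => if (j : ℕ) = n - 1 then c i else jmat F S n i j

def qmat (F : Type*) [Field F] (p m n : ℕ) : Matrix (Fin m) (Fin n) F :=
  fun j i => if (i : ℕ) = p + (j : ℕ) then 1 else 0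

def rmat (F : Type*) [Field F] (p m n : ℕ) : Matrix (Fin n) (Fin m) F :=
  fun i j => if (i : ℕ) = p + (j : ℕ) then 1 else 0

noncomputable def dvec {F : Type*} [Field F] {p m n : ℕ} (hn : n = p + m) (c : Fin n → F) :
    Fin m → F :=
  fun j => c ⟨p + (j : ℕ), by omega⟩

section Main

variable {F : Type*} [Field F] {S : ℕ → Prop} {p m n : ℕ} {c : Fin n → F}

lemma mulVec_sumv {k l : ℕ} {ι : Type*} (s : Finset ι) (A : Matrix (Fin k) (Fin l) F)
    (v : ι → Fin l → F) : A *ᵥ (∑ t ∈ s, v t) = ∑ t ∈ s, A *ᵥ v t := by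
  induction s using Finset.cons_induction with
  | empty => simp [Matrix.mulVec_zero]
  | cons a s ha ih => simp [Finset.sum_cons, Matrix.mulVec_add, ih]

lemma matrix_eq_of_cols {k l : ℕ} {X Y : Matrix (Fin k) (Fin l) F}
    (h : ∀ j, X *ᵥ Pi.single j 1 = Y *ᵥ Pi.single j 1) : X = Y := by
  have := matrix_eq_zero_of_cols (X := X - Y) (fun j => by
    rw [Matrix.sub_mulVec, h j, sub_self])
  exact sub_eq_zero.mp this

lemma mat_col (j : Fin n) : mat F S n c *ᵥ Pi.single j 1 = fun i => mat F S n c i j := by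
  funext i
  simp

lemma stepW (hn : n = p + m) (hm : 0 < m) (hb : S p) (i : Fin n) (hip : (i : ℕ) < p) :
    mat F S n c *ᵥ Pi.single i 1 = 0 ∨
      ∃ h : (i : ℕ) + 1 < p,
        mat F S n c *ᵥ Pi.single i 1 = Pi.single (⟨(i : ℕ) + 1, by omega⟩ : Fin n) 1 := by
  have hne : (i : ℕ) ≠ n - 1 := by omega
  by_cases hS : S ((i : ℕ) + 1)
  · left
    funext j
    rw [mat_col]
    show mat F S n c j i = 0
    rw [mat, jmat]
    rw [if_neg hne, if_neg]
    rintro ⟨h1, h2⟩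
    exact h2 (by rw [h1]; exact hS)
  · right
    have hlt : (i : ℕ) + 1 < p := by
      rcases Nat.lt_or_ge ((i : ℕ) + 1) p with h | h
      · exact h
      · exfalso
        have : (i : ℕ) + 1 = p := by omega
        exact hS (by rw [this]; exact hb)
    refine ⟨hlt, ?_⟩
    funext j
    rw [mat_col]
    show mat F S n c j i = _
    rw [mat, jmat, if_neg hne, Pi.single_apply]
    by_cases hj : (j : ℕ) = (i : ℕ) + 1
    · rw [if_pos ⟨hj, by rw [hj]; exact hS⟩, if_pos (by exact Fin.ext hj)]
    · rw [if_neg (by rintro ⟨h1, h2⟩; exact hj h1), if_neg (by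
        intro h; exact hj (by rw [h])) ]

lemma suppW_step (hn : n = p + m) (hm : 0 < m) (hb : S p) (w : Fin n → F)
    (hw : ∀ i : Fin n, p ≤ (i : ℕ) → w i = 0) :
    ∀ j : Fin n, p ≤ (j : ℕ) → (mat F S n c *ᵥ w) j = 0 := by
  intro j hj
  show ∑ t, mat F S n c j t * w t = 0
  apply Finset.sum_eq_zero
  intro t _
  by_cases hwt : w t = 0
  · rw [hwt, mul_zero]
  · have htp : (t : ℕ) < p := by
      by_contra hge
      exact hwt (hw t (by omega))
    rw [mat, jmat, if_neg (show (t : ℕ) ≠ n - 1 by omega), if_neg, zero_mul]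
    rintro ⟨h1, h2⟩
    have hjp : (j : ℕ) = p := by omega
    exact h2 (by rw [hjp]; exact hb)

lemma suppW_pow (hn : n = p + m) (hm : 0 < m) (hb : S p) (w : Fin n → F)
    (hw : ∀ i : Fin n, p ≤ (i : ℕ) → w i = 0) (k : ℕ) :
    ∀ j : Fin n, p ≤ (j : ℕ) → ((mat F S n c) ^ k *ᵥ w) j = 0 := by
  induction k with
  | zero => intro j hj; rw [pow_zero, Matrix.one_mulVec]; exact hw j hj
  | succ k ih =>
      intro j hj
      rw [pow_succ', ← Matrix.mulVec_mulVec]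
      exact suppW_step hn hm hb _ (fun i hi => ih i hi) j hj

lemma deathW_aux (hn : n = p + m) (hm : 0 < m) (hb : S p) :
    ∀ (k : ℕ) (w : Fin n → F),
      (∀ i : Fin n, ((i : ℕ) < p - k ∨ p ≤ (i : ℕ)) → w i = 0) →
      (mat F S n c) ^ k *ᵥ w = 0 := by
  intro k
  induction k with
  | zero =>
      intro w hw
      rw [pow_zero, Matrix.one_mulVec]
      funext i
      exact hw i (by omega)
  | succ k ih =>
      intro w hw
      rw [pow_succ, ← Matrix.mulVec_mulVec]
      apply ih
      intro i hi
      show ∑ t, mat F S n c i t * w t = 0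
      apply Finset.sum_eq_zero
      intro t _
      by_cases hwt : w t = 0
      · rw [hwt, mul_zero]
      · have htb : p - (k + 1) ≤ (t : ℕ) ∧ (t : ℕ) < p := by
          by_contra hcon
          exact hwt (hw t (by omega))
        rw [mat, jmat, if_neg (show (t : ℕ) ≠ n - 1 by omega), if_neg, zero_mul]
        rintro ⟨h1, h2⟩
        have hip : (i : ℕ) ≠ p := fun he => h2 (by rw [he]; exact hb)
        omega

lemma deathW (hn : n = p + m) (hm : 0 < m) (hb : S p) (w : Fin n → F)
    (hw : ∀ i : Fin n, p ≤ (i : ℕ) → w i = 0) :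
    (mat F S n c) ^ p *ᵥ w = 0 :=
  deathW_aux hn hm hb p w (fun i hi => hw i (by omega))

lemma chainL (hn : n = p + m) (hm : 0 < m) (hc : ∀ i, p < i → i < n → ¬ S i)
    (j : ℕ) (hj : j < m) :
    (mat F S n c) ^ j *ᵥ Pi.single (⟨p, by omega⟩ : Fin n) 1
      = Pi.single (⟨p + j, by omega⟩ : Fin n) 1 := by
  induction j with
  | zero =>
      rw [pow_zero, Matrix.one_mulVec]
      exact congrArg (fun z => Pi.single z 1) (Fin.ext (by show p = p + 0; omega))
  | succ k ih =>
      rw [pow_succ', ← Matrix.mulVec_mulVec, ih (by omega)]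
      funext i
      rw [mat_col]
      show mat F S n c i ⟨p + k, by omega⟩ = _
      rw [mat, jmat, if_neg (show ((⟨p + k, by omega⟩ : Fin n) : ℕ) ≠ n - 1 by
        show p + k ≠ n - 1; omega), Pi.single_apply]
      by_cases hik : (i : ℕ) = p + k + 1
      · rw [if_pos ⟨by exact hik, by rw [hik]; exact hc _ (by omega) (by omega)⟩,
          if_pos (Fin.ext (by exact hik))]
      · rw [if_neg (by rintro ⟨h1, h2⟩; exact hik h1),
          if_neg (fun h => hik (by rw [h]; rfl))]

lemma colLast (hn : n = p + m) (hm : 0 < m) :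
    mat F S n c *ᵥ Pi.single (⟨n - 1, by omega⟩ : Fin n) 1 = c := by
  funext i
  rw [mat_col]
  show mat F S n c i ⟨n - 1, by omega⟩ = c i
  rw [mat, if_pos rfl]

lemma powm (hn : n = p + m) (hm : 0 < m) (hb : S p) (hc : ∀ i, p < i → i < n → ¬ S i) :
    (mat F S n c) ^ m *ᵥ Pi.single (⟨p, by omega⟩ : Fin n) 1 = c := by
  have h1 : (mat F S n c) ^ m = mat F S n c * (mat F S n c) ^ (m - 1) := by
    rw [← pow_succ']; congr 1; omega
  rw [h1, ← Matrix.mulVec_mulVec, chainL hn hm hc (m - 1) (by omega)]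
  have h2 : (⟨p + (m - 1), by omega⟩ : Fin n) = ⟨n - 1, by omega⟩ := Fin.ext (by
    show p + (m - 1) = n - 1; omega)
  rw [h2, colLast hn hm]

lemma powW (hn : n = p + m) (hm : 0 < m) (hb : S p) (w : Fin n → F)
    (hw : ∀ i : Fin n, p ≤ (i : ℕ) → w i = 0) (K : ℕ) (hK : p ≤ K) :
    (mat F S n c) ^ K *ᵥ w = 0 := by
  have h1 : (mat F S n c) ^ K = (mat F S n c) ^ (K - p) * (mat F S n c) ^ p := by
    rw [← pow_add]; congr 1; omega
  rw [h1, ← Matrix.mulVec_mulVec, deathW hn hm hb w hw, Matrix.mulVec_zero]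

lemma nilpotent_of (hn : n = p + m) (hm : 0 < m) (hb : S p)
    (hc : ∀ i, p < i → i < n → ¬ S i)
    (h : ∀ i : Fin n, p ≤ (i : ℕ) → c i = 0) :
    (mat F S n c) ^ n = 0 := by
  apply matrix_eq_zero_of_cols
  intro j
  by_cases hj : (j : ℕ) < p
  · have hsupp : ∀ i : Fin n, p ≤ (i : ℕ) → (Pi.single j 1 : Fin n → F) i = 0 := by
      intro i hi
      rw [Pi.single_apply, if_neg (fun he => by omega)]
    rw [powW hn hm hb _ hsupp n (by omega)]
  · have hj2 : j = ⟨p + ((j : ℕ) - p), by omega⟩ :=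
      Fin.ext (show (j : ℕ) = p + ((j : ℕ) - p) from by omega)
    rw [hj2, ← chainL hn hm hc ((j : ℕ) - p) (by omega), Matrix.mulVec_mulVec, ← pow_add]
    have h3 : n + ((j : ℕ) - p) = ((j : ℕ) - p) + p + m := by omega
    rw [h3, pow_add, ← Matrix.mulVec_mulVec, powm hn hm hb hc, pow_add,
      ← Matrix.mulVec_mulVec, deathW hn hm hb c h, Matrix.mulVec_zero]

/-- the part of `c` below `p`. -/
noncomputable def cW (p : ℕ) {n : ℕ} (c : Fin n → F) : Fin n → F :=
  fun i => if (i : ℕ) < p then c i else 0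

lemma cW_supp : ∀ i : Fin n, p ≤ (i : ℕ) → cW p c i = 0 := by
  intro i hi
  rw [cW, if_neg (by omega)]

lemma c_split (hn : n = p + m) (hm : 0 < m)
    (h : ∀ i : Fin n, p ≤ (i : ℕ) → c i = if (i : ℕ) = n - 1 then 1 else 0) :
    c = cW p c + Pi.single (⟨n - 1, by omega⟩ : Fin n) 1 := by
  funext i
  rw [Pi.add_apply, cW, Pi.single_apply]
  by_cases hi : (i : ℕ) < p
  · rw [if_pos hi, if_neg, add_zero]
    intro he
    have : (i : ℕ) = n - 1 := by rw [he]
    omega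
  · rw [if_neg hi, h i (by omega), zero_add]
    by_cases he : (i : ℕ) = n - 1
    · rw [if_pos he, if_pos (Fin.ext (show (i : ℕ) = n - 1 from by omega))]
    · rw [if_neg he, if_neg (fun h2 => he (by rw [h2]))]

lemma powLast (hn : n = p + m) (hm : 0 < m) (hb : S p)
    (hc : ∀ i, p < i → i < n → ¬ S i)
    (h : ∀ i : Fin n, p ≤ (i : ℕ) → c i = if (i : ℕ) = n - 1 then 1 else 0) (k : ℕ) :
    (mat F S n c) ^ k *ᵥ Pi.single (⟨n - 1, by omega⟩ : Fin n) 1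
      = Pi.single (⟨n - 1, by omega⟩ : Fin n) 1
        + ∑ t ∈ Finset.range k, (mat F S n c) ^ t *ᵥ cW p c := by
  induction k with
  | zero => rw [pow_zero, Matrix.one_mulVec, Finset.range_zero, Finset.sum_empty, add_zero]
  | succ k ih =>
      rw [pow_succ', ← Matrix.mulVec_mulVec, ih, Matrix.mulVec_add, mulVec_sumv,
        colLast hn hm]
      rw [Finset.sum_range_succ']
      have h2 : ∀ t, mat F S n c *ᵥ ((mat F S n c) ^ t *ᵥ cW p c)
          = (mat F S n c) ^ (t + 1) *ᵥ cW p c := by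
        intro t
        rw [Matrix.mulVec_mulVec, ← pow_succ']
      rw [Finset.sum_congr rfl (fun t _ => h2 t), pow_zero, Matrix.one_mulVec]
      nth_rewrite 1 [c_split hn hm h]
      abel

lemma powP (hn : n = p + m) (hm : 0 < m) (hb : S p)
    (hc : ∀ i, p < i → i < n → ¬ S i)
    (h : ∀ i : Fin n, p ≤ (i : ℕ) → c i = if (i : ℕ) = n - 1 then 1 else 0)
    (K : ℕ) (hK : n ≤ K) :
    (mat F S n c) ^ K *ᵥ Pi.single (⟨p, by omega⟩ : Fin n) 1
      = Pi.single (⟨n - 1, by omega⟩ : Fin n) 1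
        + ∑ t ∈ Finset.range p, (mat F S n c) ^ t *ᵥ cW p c := by
  have h1 : (mat F S n c) ^ K = (mat F S n c) ^ (K - m) * (mat F S n c) ^ m := by
    rw [← pow_add]; congr 1; omega
  rw [h1, ← Matrix.mulVec_mulVec, powm hn hm hb hc]
  have hsplit := congrArg (fun w => (mat F S n c) ^ (K - m) *ᵥ w) (c_split hn hm h)
  simp only [Matrix.mulVec_add] at hsplit
  rw [hsplit, powW hn hm hb _ cW_supp (K - m) (by omega),
    powLast hn hm hb hc h (K - m), zero_add]
  congr 1
  symm
  apply Finset.sum_subset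
  · exact Finset.range_subset_range.mpr (by omega)
  · intro t _ ht
    rw [Finset.mem_range, Nat.not_lt] at ht
    exact powW hn hm hb _ cW_supp t ht

lemma semi_pow_eq (hn : n = p + m) (hm : 0 < m) (hb : S p)
    (hc : ∀ i, p < i → i < n → ¬ S i)
    (h : ∀ i : Fin n, p ≤ (i : ℕ) → c i = if (i : ℕ) = n - 1 then 1 else 0) :
    (mat F S n c) ^ (n + 1) = (mat F S n c) ^ n := by
  apply matrix_eq_of_cols
  intro j
  by_cases hj : (j : ℕ) < p
  · have hsupp : ∀ i : Fin n, p ≤ (i : ℕ) → (Pi.single j 1 : Fin n → F) i = 0 := by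
      intro i hi
      rw [Pi.single_apply, if_neg (fun he => by omega)]
    rw [powW hn hm hb _ hsupp (n + 1) (by omega), powW hn hm hb _ hsupp n (by omega)]
  · have hj2 : j = ⟨p + ((j : ℕ) - p), by omega⟩ :=
      Fin.ext (show (j : ℕ) = p + ((j : ℕ) - p) from by omega)
    rw [hj2, ← chainL hn hm hc ((j : ℕ) - p) (by omega), Matrix.mulVec_mulVec,
      Matrix.mulVec_mulVec, ← pow_add, ← pow_add,
      powP hn hm hb hc h (n + 1 + ((j : ℕ) - p)) (by omega),
      powP hn hm hb hc h (n + ((j : ℕ) - p)) (by omega)]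

lemma not_nilpotent_of (hn : n = p + m) (hm : 0 < m) (hb : S p)
    (hc : ∀ i, p < i → i < n → ¬ S i)
    (h : ∀ i : Fin n, p ≤ (i : ℕ) → c i = if (i : ℕ) = n - 1 then 1 else 0) :
    ¬ IsNilpotent (mat F S n c) := by
  rintro ⟨k, hk⟩
  have h1 := powLast hn hm hb hc h k
  rw [hk, Matrix.zero_mulVec] at h1
  have h2 := congrFun h1 ⟨n - 1, by omega⟩
  rw [Pi.zero_apply, Pi.add_apply, Pi.single_apply, if_pos rfl, Finset.sum_apply] at h2
  have h3 : ∀ t ∈ Finset.range k, ((mat F S n c) ^ t *ᵥ cW p c) (⟨n - 1, by omega⟩ : Fin n) = 0 := by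
    intro t _
    exact suppW_pow hn hm hb _ cW_supp t _ (by show p ≤ n - 1; omega)
  rw [Finset.sum_congr rfl h3, Finset.sum_const, smul_zero, add_zero] at h2
  exact one_ne_zero h2.symm

lemma qmat_apply (j : Fin m) (i : Fin n) :
    qmat F p m n j i = if (i : ℕ) = p + (j : ℕ) then 1 else 0 := rfl

lemma rmat_apply (i : Fin n) (j : Fin m) :
    rmat F p m n i j = if (i : ℕ) = p + (j : ℕ) then 1 else 0 := rfl

lemma comp_apply (d : Fin m → F) (i j : Fin m) :
    comp d i j = if (j : ℕ) = m - 1 then d i else if (i : ℕ) = (j : ℕ) + 1 then 1 else 0 := rfl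

lemma mat_apply (i j : Fin n) :
    mat F S n c i j = if (j : ℕ) = n - 1 then c i else jmat F S n i j := rfl

lemma jmat_one {i j : Fin n} (h1 : (i : ℕ) = (j : ℕ) + 1) (h2 : ¬ S (i : ℕ)) :
    jmat F S n i j = 1 := by
  simp only [jmat]
  rw [if_pos ⟨h1, h2⟩]

lemma jmat_zero {i j : Fin n} (h : ¬ ((i : ℕ) = (j : ℕ) + 1 ∧ ¬ S (i : ℕ))) :
    jmat F S n i j = 0 := by
  simp only [jmat]
  rw [if_neg h]

lemma qmat_mul_rmat (hn : n = p + m) : qmat F p m n * rmat F p m n = 1 := by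
  ext j j'
  rw [Matrix.mul_apply]
  rw [Finset.sum_eq_single (⟨p + (j : ℕ), by omega⟩ : Fin n)]
  · rw [qmat_apply, rmat_apply, Matrix.one_apply,
      if_pos (show p + (j : ℕ) = p + (j : ℕ) from rfl), one_mul]
    by_cases hj : j = j'
    · rw [if_pos (show p + (j : ℕ) = p + (j' : ℕ) from by rw [hj]), if_pos hj]
    · rw [if_neg (show ¬ p + (j : ℕ) = p + (j' : ℕ) from fun h2 => hj (Fin.ext (by omega))),
        if_neg hj]
  · intro t _ ht
    rw [qmat_apply, if_neg (fun h2 => ht (Fin.ext h2)), zero_mul]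
  · intro hmem
    exact absurd (Finset.mem_univ _) hmem

lemma qmat_mul_mat (hn : n = p + m) (hm : 0 < m) (hb : S p)
    (hc : ∀ i, p < i → i < n → ¬ S i) :
    qmat F p m n * mat F S n c = comp (dvec hn c) * qmat F p m n := by
  ext j i
  rw [Matrix.mul_apply, Matrix.mul_apply]
  rw [Finset.sum_eq_single (⟨p + (j : ℕ), by omega⟩ : Fin n)]
  · rw [qmat_apply, if_pos (show p + (j : ℕ) = p + (j : ℕ) from rfl), one_mul]
    by_cases hip : p ≤ (i : ℕ)
    · rw [Finset.sum_eq_single (⟨(i : ℕ) - p, by omega⟩ : Fin m)]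
      · rw [qmat_apply, if_pos (show (i : ℕ) = p + ((i : ℕ) - p) from by omega), mul_one]
        by_cases hilast : (i : ℕ) = n - 1
        · rw [mat_apply, if_pos hilast, comp_apply,
            if_pos (show (i : ℕ) - p = m - 1 from by omega)]
          rfl
        · rw [mat_apply, if_neg hilast, comp_apply,
            if_neg (show ¬ (i : ℕ) - p = m - 1 from by omega)]
          by_cases hstep : p + (j : ℕ) = (i : ℕ) + 1
          · rw [jmat_one (show ((⟨p + (j : ℕ), by omega⟩ : Fin n) : ℕ) = (i : ℕ) + 1 from hstep)
                (hc _ (by show p < p + (j : ℕ); omega) (by show p + (j : ℕ) < n; omega)),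
              if_pos (show (j : ℕ) = ((i : ℕ) - p) + 1 from by omega)]
          · rw [jmat_zero (by
                rintro ⟨h1, h2⟩
                exact hstep h1),
              if_neg (show ¬ (j : ℕ) = ((i : ℕ) - p) + 1 from by omega)]
      · intro u _ hu
        rw [qmat_apply, if_neg (fun h2 => hu (Fin.ext (show (u : ℕ) = (i : ℕ) - p from by omega))),
          mul_zero]
      · intro hmem
        exact absurd (Finset.mem_univ _) hmem
    · rw [mat_apply, if_neg (show ¬ (i : ℕ) = n - 1 from by omega)]
      rw [jmat_zero (by
        rintro ⟨h1, h2⟩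
        have h1' : p + (j : ℕ) = (i : ℕ) + 1 := h1
        have hj0 : p + (j : ℕ) = p := by omega
        exact h2 (by show S (p + (j : ℕ)); rw [hj0]; exact hb))]
      symm
      apply Finset.sum_eq_zero
      intro u _
      rw [qmat_apply, if_neg (show ¬ (i : ℕ) = p + (u : ℕ) from by omega), mul_zero]
  · intro t _ ht
    rw [qmat_apply, if_neg (fun h2 => ht (Fin.ext h2)), zero_mul]
  · intro hmem
    exact absurd (Finset.mem_univ _) hmem

lemma qmat_mul_pow (hn : n = p + m) (hm : 0 < m) (hb : S p)
    (hc : ∀ i, p < i → i < n → ¬ S i) (k : ℕ) :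
    qmat F p m n * (mat F S n c) ^ k = (comp (dvec hn c)) ^ k * qmat F p m n := by
  induction k with
  | zero => rw [pow_zero, pow_zero, Matrix.mul_one, Matrix.one_mul]
  | succ k ih =>
      rw [pow_succ, pow_succ, ← Matrix.mul_assoc, ih, Matrix.mul_assoc,
        qmat_mul_mat hn hm hb hc, ← Matrix.mul_assoc]

lemma comp_pow_zero_of (hn : n = p + m) (hm : 0 < m) (hb : S p)
    (hc : ∀ i, p < i → i < n → ¬ S i) (k : ℕ) (h : (mat F S n c) ^ k = 0) :
    (comp (dvec hn c)) ^ k = 0 := by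
  have h1 : (comp (dvec hn c)) ^ k * (qmat F p m n * rmat F p m n) = 0 := by
    rw [← Matrix.mul_assoc, ← qmat_mul_pow hn hm hb hc, h, Matrix.mul_zero, Matrix.zero_mul]
  rwa [qmat_mul_rmat hn, Matrix.mul_one] at h1

lemma comp_semi_zero_of (hn : n = p + m) (hm : 0 < m) (hb : S p)
    (hc : ∀ i, p < i → i < n → ¬ S i) (ℓ : ℕ)
    (h : (mat F S n c) ^ ℓ * (mat F S n c - 1) = 0) :
    (comp (dvec hn c)) ^ ℓ * (comp (dvec hn c) - 1) = 0 := by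
  have key : qmat F p m n * ((mat F S n c) ^ ℓ * (mat F S n c - 1))
      = (comp (dvec hn c)) ^ ℓ * (comp (dvec hn c) - 1) * qmat F p m n := by
    rw [← Matrix.mul_assoc, qmat_mul_pow hn hm hb hc, Matrix.mul_assoc, Matrix.mul_sub,
      Matrix.mul_one, qmat_mul_mat hn hm hb hc]
    rw [show comp (dvec hn c) * qmat F p m n - qmat F p m n
        = (comp (dvec hn c) - 1) * qmat F p m n from by rw [Matrix.sub_mul, Matrix.one_mul]]
    rw [← Matrix.mul_assoc]
  have h1 : (comp (dvec hn c)) ^ ℓ * (comp (dvec hn c) - 1)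
      * (qmat F p m n * rmat F p m n) = 0 := by
    rw [← Matrix.mul_assoc, ← key, h, Matrix.mul_zero, Matrix.zero_mul]
  rwa [qmat_mul_rmat hn, Matrix.mul_one] at h1

lemma nilpotent_iff (hn : n = p + m) (hm : 0 < m) (hb : S p)
    (hc : ∀ i, p < i → i < n → ¬ S i) :
    IsNilpotent (mat F S n c) ↔ ∀ i : Fin n, p ≤ (i : ℕ) → c i = 0 := by
  constructor
  · rintro ⟨k, hk⟩
    have h1 := comp_pow_zero_of hn hm hb hc k hk
    have h2 := comp_nilpotent hm (dvec hn c) k h1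
    intro i hi
    have h3 := congrFun h2 ⟨(i : ℕ) - p, by omega⟩
    have h4 : dvec hn c ⟨(i : ℕ) - p, by omega⟩ = c i := by
      show c _ = c i
      congr 1
      exact Fin.ext (show p + ((i : ℕ) - p) = (i : ℕ) from by omega)
    rw [h4] at h3
    simpa using h3
  · intro h
    exact ⟨n, nilpotent_of hn hm hb hc h⟩

lemma semi_iff (hn : n = p + m) (hm : 0 < m) (hb : S p)
    (hc : ∀ i, p < i → i < n → ¬ S i) :
    (IsSemiIdempotent (mat F S n c) ∧ ¬ IsNilpotent (mat F S n c)) ↔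
      ∀ i : Fin n, p ≤ (i : ℕ) → c i = if (i : ℕ) = n - 1 then 1 else 0 := by
  constructor
  · rintro ⟨⟨ℓ, hdvd⟩, hnil⟩
    have haev : aeval (mat F S n c) ((X : F[X]) ^ ℓ * (X - 1)) = 0 := by
      obtain ⟨q, hq⟩ := hdvd
      rw [hq, _root_.map_mul, minpoly.aeval, zero_mul]
    have hMl : (mat F S n c) ^ ℓ * (mat F S n c - 1) = 0 := by
      rwa [_root_.map_mul, map_pow, aeval_X, map_sub, aeval_X, _root_.map_one] at haev
    have hC := comp_semi_zero_of hn hm hb hc ℓ hMl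
    have hdne : dvec hn c ≠ 0 := by
      intro h0
      apply hnil
      apply (nilpotent_iff hn hm hb hc).mpr
      intro i hi
      have h3 := congrFun h0 ⟨(i : ℕ) - p, by omega⟩
      have h4 : dvec hn c ⟨(i : ℕ) - p, by omega⟩ = c i := by
        show c _ = c i
        congr 1
        exact Fin.ext (show p + ((i : ℕ) - p) = (i : ℕ) from by omega)
      rw [h4] at h3
      simpa using h3
    have hd := comp_semi hm (dvec hn c) ℓ hC hdne
    intro i hi
    have h3 := hd ⟨(i : ℕ) - p, by omega⟩
    have h4 : dvec hn c ⟨(i : ℕ) - p, by omega⟩ = c i := by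
      show c _ = c i
      congr 1
      exact Fin.ext (show p + ((i : ℕ) - p) = (i : ℕ) from by omega)
    rw [h4] at h3
    rw [h3]
    by_cases h5 : (i : ℕ) - p = m - 1
    · rw [if_pos (show ((⟨(i : ℕ) - p, by omega⟩ : Fin m) : ℕ) = m - 1 from h5),
        if_pos (show (i : ℕ) = n - 1 from by omega)]
    · rw [if_neg (show ¬ ((⟨(i : ℕ) - p, by omega⟩ : Fin m) : ℕ) = m - 1 from h5),
        if_neg (show ¬ (i : ℕ) = n - 1 from by omega)]
  · intro h
    refine ⟨⟨n, minpoly.dvd F _ ?_⟩, not_nilpotent_of hn hm hb hc h⟩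
    rw [_root_.map_mul, map_pow, aeval_X, map_sub, aeval_X, _root_.map_one]
    have h8 := semi_pow_eq hn hm hb hc h
    rw [Matrix.mul_sub, Matrix.mul_one, ← pow_succ, h8, sub_self]

lemma mat_lastcol (hn1 : 0 < n) {M : Matrix (Fin n) (Fin n) F}
    (hM : ∀ i j : Fin n, (j : ℕ) + 1 < n → M i j = jmat F S n i j) :
    mat F S n (fun i => M i ⟨n - 1, by omega⟩) = M := by
  ext i j
  rw [mat_apply]
  by_cases hj : (j : ℕ) = n - 1
  · rw [if_pos hj]
    congr 1
    exact Fin.ext hj.symm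
  · rw [if_neg hj]
    exact (hM i j (by omega)).symm

lemma card_mats (hn1 : 0 < n) (P : Matrix (Fin n) (Fin n) F → Prop) :
    Nat.card {M : Matrix (Fin n) (Fin n) F //
        (∀ i j : Fin n, (j : ℕ) + 1 < n → M i j = jmat F S n i j) ∧ P M}
      = Nat.card {c : Fin n → F // P (mat F S n c)} := by
  apply Nat.card_congr
  refine ⟨fun M => ⟨fun i => M.1 i ⟨n - 1, by omega⟩, ?_⟩,
    fun c => ⟨mat F S n c.1, ?_, ?_⟩, ?_, ?_⟩
  · rw [mat_lastcol hn1 M.2.1]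
    exact M.2.2
  · intro i j hj
    rw [mat_apply, if_neg (by omega)]
  · exact c.2
  · intro M
    apply Subtype.ext
    exact mat_lastcol hn1 M.2.1
  · intro c
    apply Subtype.ext
    funext i
    show mat F S n c.1 i ⟨n - 1, by omega⟩ = c.1 i
    rw [mat_apply, if_pos rfl]

lemma card_fixed_tail [Fintype F] (hpn : p ≤ n) (v : Fin n → F) :
    Nat.card {c : Fin n → F // ∀ i : Fin n, p ≤ (i : ℕ) → c i = v i}
      = Fintype.card F ^ p := by
  have e : {c : Fin n → F // ∀ i : Fin n, p ≤ (i : ℕ) → c i = v i} ≃ (Fin p → F) :=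
    { toFun := fun c j => c.1 ⟨(j : ℕ), by omega⟩
      invFun := fun g => ⟨fun i => if h : (i : ℕ) < p then g ⟨(i : ℕ), h⟩ else v i, fun i hi => by
        show (if h : (i : ℕ) < p then g ⟨(i : ℕ), h⟩ else v i) = v i
        rw [dif_neg (by omega)]⟩
      left_inv := fun c => by
        apply Subtype.ext
        funext i
        by_cases h : (i : ℕ) < p
        · exact dif_pos h
        · exact (dif_neg h).trans (c.2 i (by omega)).symm
      right_inv := fun g => by
        funext j
        show (if h : ((⟨(j : ℕ), by omega⟩ : Fin n) : ℕ) < p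
            then g ⟨((⟨(j : ℕ), by omega⟩ : Fin n) : ℕ), h⟩ else _) = g j
        rw [dif_pos (show ((⟨(j : ℕ), by omega⟩ : Fin n) : ℕ) < p from j.2)] }
  rw [Nat.card_congr e, Nat.card_eq_fintype_card, Fintype.card_fun, Fintype.card_fin]

end Main

end CLM

theorem count_last_column_modifications' (F : Type*) [Field F] [Fintype F]
    (s : ℕ) (hs : 0 < s) (r : ℕ → ℕ) (hr : ∀ i < s, 0 < r i)
    (n : ℕ) (hn : n = ∑ i ∈ Finset.range s, r i) :
    Nat.card {M : Matrix (Fin n) (Fin n) F //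
        (∀ i j : Fin n, (j : ℕ) + 1 < n → M i j = CLM.jmat F (fun x => ∃ k ≤ s, x = ∑ t ∈ Finset.range k, r t) n i j) ∧
        IsNilpotent M}
      = Fintype.card F ^ (n - r (s - 1)) ∧
    Nat.card {M : Matrix (Fin n) (Fin n) F //
        (∀ i j : Fin n, (j : ℕ) + 1 < n → M i j = CLM.jmat F (fun x => ∃ k ≤ s, x = ∑ t ∈ Finset.range k, r t) n i j) ∧
        IsSemiIdempotent M ∧ ¬ IsNilpotent M}
      = Fintype.card F ^ (n - r (s - 1)) := by
  set S : ℕ → Prop := fun x => ∃ k ≤ s, x = ∑ t ∈ Finset.range k, r t with hS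
  set p : ℕ := ∑ t ∈ Finset.range (s - 1), r t with hp
  set m : ℕ := r (s - 1) with hm0
  have hm : 0 < m := hr (s - 1) (by omega)
  have hn' : n = p + m := by
    rw [hn, show s = (s - 1) + 1 from by omega, Finset.sum_range_succ]
  have hb : S p := ⟨s - 1, by omega, rfl⟩
  have hc : ∀ i, p < i → i < n → ¬ S i := by
    rintro i hpi hin ⟨k, hks, hik⟩
    by_cases hk : k ≤ s - 1
    · have h1 : ∑ t ∈ Finset.range k, r t ≤ p := by
        apply Finset.sum_le_sum_of_subset
        exact Finset.range_subset_range.mpr hk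
      omega
    · have hk2 : k = s := by omega
      rw [hk2, ← hn] at hik
      omega
  have hn1 : 0 < n := by omega
  have htail : n - r (s - 1) = p := by omega
  rw [htail]
  constructor
  · rw [CLM.card_mats hn1 IsNilpotent,
      Nat.card_congr (Equiv.subtypeEquivRight (fun c => CLM.nilpotent_iff hn' hm hb hc))]
    have hcount := CLM.card_fixed_tail (F := F) (show p ≤ n from by omega) (0 : Fin n → F)
    simpa using hcount
  · rw [CLM.card_mats hn1 (fun M => IsSemiIdempotent M ∧ ¬ IsNilpotent M),
      Nat.card_congr (Equiv.subtypeEquivRight (fun c => CLM.semi_iff hn' hm hb hc))]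
    have hcount := CLM.card_fixed_tail (F := F) (show p ≤ n from by omega)
      (fun i : Fin n => if (i : ℕ) = n - 1 then (1 : F) else 0)
    simpa using hcount



/-- Let `F` be a finite field with `q` elements and
`A = diag(J_{r₁}(0), …, J_{r_s}(0))` with all `rᵢ > 0` and `n = r₁ + ⋯ + r_s`.
Then the number of nilpotent matrices obtainable by replacing the last column of
`A` is `q^(n - r_s)`, as is the number of non-nilpotent semi-idempotent matrices
so obtainable. -/

theorem count_last_column_modifications (F : Type*) [Field F] [Fintype F]
    (s : ℕ) (hs : 0 < s) (r : ℕ → ℕ) (hr : ∀ i < s, 0 < r i)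
    (n : ℕ) (hn : n = ∑ i ∈ Finset.range s, r i) :
    Nat.card {M : Matrix (Fin n) (Fin n) F //
        (∀ i j : Fin n, (j : ℕ) + 1 < n → M i j = jordanBlockDiag F s r n i j) ∧
        IsNilpotent M}
      = Fintype.card F ^ (n - r (s - 1)) ∧
    Nat.card {M : Matrix (Fin n) (Fin n) F //
        (∀ i j : Fin n, (j : ℕ) + 1 < n → M i j = jordanBlockDiag F s r n i j) ∧
        IsSemiIdempotent M ∧ ¬ IsNilpotent M}
      = Fintype.card F ^ (n - r (s - 1)) := by
  have hjm : ∀ i j : Fin n, jordanBlockDiag F s r n i j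
      = CLM.jmat F (fun x => ∃ k ≤ s, x = ∑ t ∈ Finset.range k, r t) n i j := by
    intro i j
    unfold jordanBlockDiag CLM.jmat
    congr 1
  have hcond : ∀ (M : Matrix (Fin n) (Fin n) F),
      (∀ i j : Fin n, (j : ℕ) + 1 < n → M i j = jordanBlockDiag F s r n i j) ↔
      (∀ i j : Fin n, (j : ℕ) + 1 < n →
        M i j = CLM.jmat F (fun x => ∃ k ≤ s, x = ∑ t ∈ Finset.range k, r t) n i j) := by
    intro M
    constructor
    · intro h1 i j hj
      exact (h1 i j hj).trans (hjm i j)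
    · intro h1 i j hj
      exact (h1 i j hj).trans (hjm i j).symm
  have h := count_last_column_modifications' F s hs r hr n hn
  refine ⟨?_, ?_⟩
  · rw [← h.1]
    exact Nat.card_congr (Equiv.subtypeEquivRight (fun M => and_congr_left' (hcond M)))
  · rw [← h.2]
    exact Nat.card_congr (Equiv.subtypeEquivRight (fun M => and_congr_left' (hcond M)))
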